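/- Let (X, Y, A) be jointly distributed with Y, A ∈ {0,1}, and assume the Markov chain X → Z → Ŷ where Z = f(X) and Ŷ = h(Z) ∈ {0,1}. Let D₀ and D₁ be the conditional distributions over X × Y given A = 0 and A = 1, let D_a^Y be the conditional distribution of Y given A = a, and let D_a^f be the conditional distribution of Z = f(X) given A = a. Then d_JS(D₀^Y, D₁^Y) ≤ √(Err₀(h ∘ f)) + d_JS(D₀^f, D₁^f) + √(Err₁(h ∘ f)). -/

import Mathlib

open MeasureTheory ProbabilityTheory
open scoped ENNReal
open Real Set

/-- Kullback–Leibler divergence (base-2 logarithm) between two mass functions,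
with the usual conventions `0 log 0 = 0`. -/
noncomputable def klFun {α : Type*} (P Q : α → ℝ≥0∞) : ℝ :=
  ∑' a, (P a).toReal * Real.logb 2 ((P a).toReal / (Q a).toReal)

/-- Jensen–Shannon divergence (base-2 logarithm):
`D_JS(P, Q) = (1/2) D_KL(P ‖ M) + (1/2) D_KL(Q ‖ M)` where `M = (P + Q)/2`. -/
noncomputable def jsFun {α : Type*} (P Q : α → ℝ≥0∞) : ℝ :=
  (klFun P (fun a => (P a + Q a) / 2) + klFun Q (fun a => (P a + Q a) / 2)) / 2

noncomputable def psi (p q : ℝ) : ℝ :=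
  p * Real.log (2*p) + q * Real.log (2*q) - (p+q) * Real.log (p+q)

noncomputable def kk (p m : ℝ) : ℝ := p * Real.log p - p * Real.log m + m - p

noncomputable def gg (s : ℝ) : ℝ := s * Real.log s + (2-s) * Real.log (2-s)

noncomputable def phi (s : ℝ) : ℝ := gg s + Real.log s * Real.log (2-s)

-- === from a1.lean ===
lemma kk_nonneg {p m : ℝ} (hp : 0 ≤ p) (hm : 0 < m) : 0 ≤ kk p m := by
  rcases eq_or_lt_of_le hp with h | h
  · simp [kk, ← h]; positivity
  · have hlog : log (m / p) ≤ m / p - 1 := Real.log_le_sub_one_of_pos (by positivity)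
    have : p * log (m / p) ≤ p * (m / p - 1) := by
      exact mul_le_mul_of_nonneg_left hlog hp
    rw [Real.log_div (ne_of_gt hm) (ne_of_gt h)] at this
    have hp' : p * (m/p - 1) = m - p := by field_simp
    unfold kk; nlinarith [this]

lemma kk_pos {p m : ℝ} (hp : 0 ≤ p) (hm : 0 < m) (hne : p ≠ m) : 0 < kk p m := by
  rcases eq_or_lt_of_le hp with h | h
  · simp [kk, ← h]; positivity
  · have hlog : log (m / p) < m / p - 1 := by
      apply Real.log_lt_sub_one_of_pos (by positivity)
      intro hc
      exact hne (by field_simp at hc; linarith)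
    have : p * log (m / p) < p * (m / p - 1) := by
      exact mul_lt_mul_of_pos_left hlog h
    rw [Real.log_div (ne_of_gt hm) (ne_of_gt h)] at this
    have hp' : p * (m/p - 1) = m - p := by field_simp
    unfold kk; nlinarith [this]

lemma kk_zero : kk 0 0 = 0 := by simp [kk]

lemma psi_eq_kk {p q : ℝ} (hp : 0 ≤ p) (hq : 0 ≤ q) :
    psi p q = kk p ((p+q)/2) + kk q ((p+q)/2) := by
  have hmul : ∀ x : ℝ, 0 ≤ x → x * log (2*x) = x * log 2 + x * log x := by
    intro x hx
    rcases eq_or_lt_of_le hx with h | h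
    · simp [← h]
    · rw [Real.log_mul (by norm_num) (ne_of_gt h)]; ring
  rcases eq_or_lt_of_le (add_nonneg hp hq) with h | h
  · have hp0 : p = 0 := by linarith
    have hq0 : q = 0 := by linarith
    simp [psi, kk, hp0, hq0]
  · have hlog : log (p+q) = log 2 + log ((p+q)/2) := by
      rw [← Real.log_mul (by norm_num) (by positivity)]
      ring_nf
    unfold psi kk
    rw [hmul p hp, hmul q hq, hlog]
    ring

lemma psi_nonneg {p q : ℝ} (hp : 0 ≤ p) (hq : 0 ≤ q) : 0 ≤ psi p q := by
  rcases eq_or_lt_of_le (add_nonneg hp hq) with h | h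
  · have hp0 : p = 0 := by linarith
    have hq0 : q = 0 := by linarith
    simp [psi, hp0, hq0]
  · rw [psi_eq_kk hp hq]
    have := kk_nonneg hp (show (0:ℝ) < (p+q)/2 by linarith)
    have := kk_nonneg hq (show (0:ℝ) < (p+q)/2 by linarith)
    linarith

lemma psi_pos {p q : ℝ} (hp : 0 ≤ p) (hq : 0 ≤ q) (hne : p ≠ q) : 0 < psi p q := by
  have h : 0 < p + q := by
    rcases (add_nonneg hp hq).lt_or_eq with h | h
    · exact h
    · exact absurd (show p = q by linarith) hne
  rw [psi_eq_kk hp hq]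
  have hm : (0:ℝ) < (p+q)/2 := by linarith
  rcases ne_or_eq p ((p+q)/2) with hne1 | he
  · have := kk_pos hp hm hne1
    have := kk_nonneg hq hm
    linarith
  · have hne2 : q ≠ (p+q)/2 := by intro hc; apply hne; linarith [he]
    have := kk_pos hq hm hne2
    have := kk_nonneg hp hm
    linarith

lemma psi_symm (p q : ℝ) : psi p q = psi q p := by unfold psi; ring_nf

lemma psi_self {p : ℝ} : psi p p = 0 := by
  unfold psi
  have : p + p = 2 * p := by ring
  rw [this]; ring

lemma continuous_psi : Continuous (fun x : ℝ × ℝ => psi x.1 x.2) := by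
  have h2 : ∀ x : ℝ, x * log (2*x) = (2*x) * log (2*x) / 2 := by intro x; ring
  unfold psi
  simp only [h2]
  fun_prop

-- === from a2.lean ===
lemma hasDerivAt_psi {q : ℝ} (hq : 0 ≤ q) {p : ℝ} (hp : 0 < p) :
    HasDerivAt (fun x => psi x q) (log (2*p) - log (p+q)) p := by
  have h1 : HasDerivAt (fun x : ℝ => x * log (2*x)) (log (2*p) + 1) p := by
    have heq : (fun x : ℝ => x * log (2*x)) = fun x => ((2*x) * log (2*x))/2 := by
      funext x; ring
    rw [heq]
    have inner : HasDerivAt (fun x : ℝ => 2*x) 2 p := by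
      simpa using (hasDerivAt_id p).const_mul 2
    have := ((Real.hasDerivAt_mul_log (x := 2*p) (by positivity)).comp p inner).div_const 2
    exact this.congr_deriv (by ring)
  have h2 : HasDerivAt (fun x : ℝ => (x+q) * log (x+q)) (log (p+q) + 1) p := by
    have inner : HasDerivAt (fun x : ℝ => x + q) 1 p := (hasDerivAt_id p).add_const q
    have := (Real.hasDerivAt_mul_log (x := p+q) (by positivity)).comp p inner
    exact this.congr_deriv (by ring)
  have := (h1.add_const (q * log (2*q))).sub h2
  exact this.congr_deriv (by ring)

lemma continuous_psi_left (q : ℝ) : Continuous (fun p => psi p q) := by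
  have h2 : ∀ x : ℝ, x * log (2*x) = (2*x) * log (2*x) / 2 := by intro x; ring
  unfold psi
  simp only [h2]
  fun_prop

lemma psi_monotoneOn {q : ℝ} (hq : 0 ≤ q) : MonotoneOn (fun p => psi p q) (Ici q) := by
  apply monotoneOn_of_deriv_nonneg (convex_Ici q) (continuous_psi_left q).continuousOn
  · intro p hp
    rw [interior_Ici] at hp
    exact (hasDerivAt_psi hq (lt_of_le_of_lt hq hp)).differentiableAt.differentiableWithinAt
  · intro p hp
    rw [interior_Ici] at hp
    have hp0 : 0 < p := lt_of_le_of_lt hq hp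
    rw [(hasDerivAt_psi hq hp0).deriv]
    have : p + q ≤ 2 * p := by linarith [(show q < p from hp).le]
    have := Real.log_le_log (by linarith) this
    linarith

lemma psi_antitoneOn {q : ℝ} (hq : 0 ≤ q) : AntitoneOn (fun p => psi p q) (Icc 0 q) := by
  apply antitoneOn_of_deriv_nonpos (convex_Icc 0 q) (continuous_psi_left q).continuousOn
  · intro p hp
    rw [interior_Icc] at hp
    exact (hasDerivAt_psi hq hp.1).differentiableAt.differentiableWithinAt
  · intro p hp
    rw [interior_Icc] at hp
    rw [(hasDerivAt_psi hq hp.1).deriv]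
    have : 2 * p ≤ p + q := by linarith [hp.1, hp.2.le]
    have := Real.log_le_log (by linarith [hp.1]) this
    linarith

lemma psi_le_tv {p q : ℝ} (hq : 0 ≤ q) (hqp : q ≤ p) : psi p q ≤ (p - q) * log 2 := by
  have key : MonotoneOn (fun p => (p - q) * log 2 - psi p q) (Ici q) := by
    apply monotoneOn_of_deriv_nonneg (convex_Ici q)
    · exact (((continuous_id.sub continuous_const).mul continuous_const).sub
        (continuous_psi_left q)).continuousOn
    · intro p hp
      rw [interior_Ici] at hp
      have hp0 : 0 < p := lt_of_le_of_lt hq hp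
      have hD : HasDerivAt (fun x : ℝ => (x - q) * log 2 - psi x q)
          (1 * log 2 - (log (2*p) - log (p+q))) p :=
        (((hasDerivAt_id p).sub_const q).mul_const (log 2)).sub (hasDerivAt_psi hq hp0)
      exact hD.differentiableAt.differentiableWithinAt
    · intro p hp
      rw [interior_Ici] at hp
      have hp0 : 0 < p := lt_of_le_of_lt hq hp
      have hD : HasDerivAt (fun x : ℝ => (x - q) * log 2 - psi x q)
          (1 * log 2 - (log (2*p) - log (p+q))) p :=
        (((hasDerivAt_id p).sub_const q).mul_const (log 2)).sub (hasDerivAt_psi hq hp0)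
      rw [hD.deriv]
      have h1 : log (2*p) = log 2 + log p := Real.log_mul (by norm_num) (ne_of_gt hp0)
      have h2 : log p ≤ log (p+q) := Real.log_le_log hp0 (by linarith)
      simp only [id_eq, one_mul]
      linarith
  have := key self_mem_Ici (mem_Ici.2 hqp) hqp
  simp only [sub_self, zero_mul, psi_self, sub_zero] at this
  linarith [this]

-- === from a3.lean ===
lemma continuous_gg : Continuous gg := by
  unfold gg
  exact (Real.continuous_mul_log).add ((Real.continuous_mul_log).comp (by fun_prop))

lemma hasDerivAt_gg {s : ℝ} (h0 : s ≠ 0) (h2 : s ≠ 2) :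
    HasDerivAt gg (log s - log (2-s)) s := by
  have h1 : HasDerivAt (fun x : ℝ => x * log x) (log s + 1) s := Real.hasDerivAt_mul_log h0
  have inner : HasDerivAt (fun x : ℝ => 2 - x) (-1) s := (hasDerivAt_id s).const_sub 2
  have h2' : HasDerivAt (fun x : ℝ => (2-x) * log (2-x)) ((log (2-s) + 1) * (-1)) s :=
    (Real.hasDerivAt_mul_log (by intro hc; exact h2 (by linarith))).comp s inner
  have := h1.add h2'
  exact this.congr_deriv (by ring)

lemma gg_nonneg {s : ℝ} (h0 : 0 < s) (h1 : s ≤ 1) : 0 ≤ gg s := by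
  have key : AntitoneOn gg (Ioc 0 1) := by
    apply antitoneOn_of_deriv_nonpos (convex_Ioc 0 1) continuous_gg.continuousOn
    · intro x hx
      rw [interior_Ioc] at hx
      exact (hasDerivAt_gg (ne_of_gt hx.1) (by linarith [hx.2])).differentiableAt
        |>.differentiableWithinAt
    · intro x hx
      rw [interior_Ioc] at hx
      rw [(hasDerivAt_gg (ne_of_gt hx.1) (by linarith [hx.2])).deriv]
      have := Real.log_le_log hx.1 (show x ≤ 2 - x by linarith [hx.2])
      linarith
  have := key (mem_Ioc.2 ⟨h0, h1⟩) (mem_Ioc.2 ⟨one_pos, le_rfl⟩) h1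
  simp only [gg] at this ⊢
  norm_num at this
  exact this

lemma phi_nonpos {s : ℝ} (h0 : 0 < s) (h1 : s ≤ 1) : phi s ≤ 0 := by
  have key : MonotoneOn phi (Ioc 0 1) := by
    apply monotoneOn_of_deriv_nonneg (convex_Ioc 0 1)
    · intro x hx
      have hx0 : x ≠ 0 := ne_of_gt hx.1
      have hx2 : (2:ℝ) - x ≠ 0 := by have := hx.2; intro hc; linarith
      exact ((continuous_gg.continuousAt).add
        (((Real.continuousAt_log hx0).mul
          ((Real.continuousAt_log hx2).comp (by fun_prop))))).continuousWithinAt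
    · intro x hx
      rw [interior_Ioc] at hx
      have hx0 : x ≠ 0 := ne_of_gt hx.1
      have hx2 : (2:ℝ) - x ≠ 0 := by intro hc; linarith [hx.2]
      have hml : HasDerivAt (fun y : ℝ => log (2-y)) (-(2-x)⁻¹) x := by
        have := (Real.hasDerivAt_log hx2).comp x ((hasDerivAt_id x).const_sub 2)
        exact this.congr_deriv (by ring)
      have hD : HasDerivAt phi
          ((log x - log (2-x)) + (x⁻¹ * log (2-x) + log x * (-(2-x)⁻¹))) x := by
        exact (hasDerivAt_gg hx0 (by intro hc; linarith [hx.2])).add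
          ((Real.hasDerivAt_log hx0).mul hml)
      exact hD.differentiableAt.differentiableWithinAt
    · intro x hx
      rw [interior_Ioc] at hx
      have hx0 : (0:ℝ) < x := hx.1
      have hx2 : (0:ℝ) < 2 - x := by linarith [hx.2]
      have hml : HasDerivAt (fun y : ℝ => log (2-y)) (-(2-x)⁻¹) x := by
        have := (Real.hasDerivAt_log (ne_of_gt hx2)).comp x ((hasDerivAt_id x).const_sub 2)
        exact this.congr_deriv (by ring)
      have hD : HasDerivAt phi
          ((log x - log (2-x)) + (x⁻¹ * log (2-x) + log x * (-(2-x)⁻¹))) x :=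
        (hasDerivAt_gg (ne_of_gt hx0) (by linarith)).add ((Real.hasDerivAt_log (ne_of_gt hx0)).mul hml)
      rw [hD.deriv]
      have heq : (log x - log (2-x)) + (x⁻¹ * log (2-x) + log x * (-(2-x)⁻¹))
          = (1-x) * gg x / (x * (2-x)) := by
        unfold gg
        field_simp
        ring
      rw [heq]
      have hg := gg_nonneg hx0 (le_of_lt hx.2)
      have h1x : 0 ≤ 1 - x := by linarith [hx.2]
      positivity
  have := key (mem_Ioc.2 ⟨h0, h1⟩) (mem_Ioc.2 ⟨one_pos, le_rfl⟩) h1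
  simp only [phi, gg] at this ⊢
  norm_num at this
  exact this

-- === from a5.lean ===
lemma key_ineq {x t : ℝ} (hx : 0 < x) (hxt : x < t) :
    2 * psi x t / (x+t) ≤ (log (2*t) - log (x+t)) * (log (x+t) - log (2*x)) := by
  have ht : 0 < t := hx.trans hxt
  have hS : 0 < x + t := by linarith
  set s : ℝ := 2*x/(x+t) with hs
  have hs0 : 0 < s := by positivity
  have hs1 : s < 1 := by rw [hs, div_lt_one hS]; linarith
  clear_value s
  have h2s : 2 - s = 2*t/(x+t) := by
    have h2 : (2:ℝ) = (2*(x+t))/(x+t) := by field_simp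
    rw [hs]
    rw [show (2:ℝ) - 2*x/(x+t) = (2*(x+t))/(x+t) - 2*x/(x+t) by rw [← h2], div_sub_div_same]
    congr 1; ring
  have hlogs : log s = log (2*x) - log (x+t) := by
    rw [hs]; exact Real.log_div (by positivity) (ne_of_gt hS)
  have hlog2s : log (2-s) = log (2*t) - log (x+t) := by
    rw [h2s]; exact Real.log_div (by positivity) (ne_of_gt hS)
  have hc1 : ((x+t)/2) * s = x := by rw [hs]; field_simp
  have hc2 : ((x+t)/2) * (2-s) = t := by rw [h2s]; field_simp
  have hpsi : psi x t = ((x+t)/2) * gg s := by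
    unfold psi gg
    rw [hlogs, hlog2s]
    linear_combination (-(log (2*x))) * hc1 + (-(log (2*t))) * hc2
  have hphi := phi_nonpos hs0 hs1.le
  unfold phi at hphi
  rw [hpsi, hlogs, hlog2s] at *
  have heq : 2 * (((x+t)/2) * gg s) / (x+t) = gg s := by field_simp
  rw [heq]
  nlinarith [hphi]

lemma G_mono {t : ℝ} (ht : 0 < t) :
    MonotoneOn (fun x => (log (2*t) - log (x+t)) / Real.sqrt (psi x t)) (Ico 0 t) := by
  have hpsipos : ∀ x ∈ Ico (0:ℝ) t, 0 < psi x t := fun x hx =>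
    psi_pos hx.1 ht.le (ne_of_lt hx.2)
  apply monotoneOn_of_deriv_nonneg (convex_Ico 0 t)
  · -- continuity
    intro x hx
    have h1 : ContinuousAt (fun x : ℝ => log (2*t) - log (x+t)) x := by
      have hadd : ContinuousAt (fun y : ℝ => y + t) x := by fun_prop
      have hne : x + t ≠ 0 := by have := hx.1; intro hc; linarith
      have : ContinuousAt (fun y : ℝ => log (y+t)) x :=
        ContinuousAt.comp (x := x) (g := log) (f := fun y : ℝ => y + t)
          (Real.continuousAt_log hne) hadd
      exact continuousAt_const.sub this
    have h2 : ContinuousAt (fun x => Real.sqrt (psi x t)) x :=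
      Real.continuous_sqrt.continuousAt.comp (continuous_psi_left t).continuousAt
    exact (h1.div h2 (by
      have := hpsipos x hx
      positivity)).continuousWithinAt
  all_goals {
    intro x hx
    rw [interior_Ico] at hx
    have hx0 : 0 < x := hx.1
    have hxt : x < t := hx.2
    have hS : 0 < x + t := by linarith
    have hD : 0 < psi x t := psi_pos hx0.le ht.le (ne_of_lt hxt)
    have hsq : 0 < Real.sqrt (psi x t) := Real.sqrt_pos.2 hD
    have hN : HasDerivAt (fun x : ℝ => log (2*t) - log (x+t)) (-((x+t)⁻¹)) x := by
      have hl : HasDerivAt (fun x : ℝ => log (x+t)) ((x+t)⁻¹) x := by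
        have := (Real.hasDerivAt_log (ne_of_gt hS)).comp x ((hasDerivAt_id x).add_const t)
        exact this.congr_deriv (by ring)
      have := hl.const_sub (log (2*t))
      convert this using 1
    have hsqD : HasDerivAt (fun x => Real.sqrt (psi x t))
        (1 / (2 * Real.sqrt (psi x t)) * (log (2*x) - log (x+t))) x :=
      (Real.hasDerivAt_sqrt (ne_of_gt hD)).comp x (hasDerivAt_psi ht.le hx0)
    have hG : HasDerivAt (fun x => (log (2*t) - log (x+t)) / Real.sqrt (psi x t))
        ((-((x+t)⁻¹) * Real.sqrt (psi x t) - (log (2*t) - log (x+t)) *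
          (1 / (2 * Real.sqrt (psi x t)) * (log (2*x) - log (x+t)))) /
          (Real.sqrt (psi x t))^2) x := hN.div hsqD (ne_of_gt hsq)
    first
    | exact hG.differentiableAt.differentiableWithinAt
    | { rw [hG.deriv]
        apply div_nonneg _ (sq_nonneg _)
        have hkey := key_ineq hx0 hxt
        set S := Real.sqrt (psi x t) with hSdef
        have hS2 : S^2 = psi x t := Real.sq_sqrt hD.le
        rw [← sub_nonneg] at hkey
        have hexp : (-((x+t)⁻¹) * S - (log (2*t) - log (x+t)) *
            (1 / (2 * S) * (log (2*x) - log (x+t))))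
            = ((log (2*t) - log (x+t)) * (log (x+t) - log (2*x)) - 2 * psi x t / (x+t)) / (2*S) := by
          rw [← hS2]
          field_simp
          ring
        rw [hexp]
        exact div_nonneg hkey (by positivity) }
  }

lemma psi_sqrt_triangle_mid {p r q : ℝ} (hp : 0 ≤ p) (hpr : p ≤ r) (hrq : r ≤ q) :
    Real.sqrt (psi p q) ≤ Real.sqrt (psi p r) + Real.sqrt (psi r q) := by
  rcases eq_or_lt_of_le hpr with rfl | hpr'
  · simp [psi_self]
  rcases eq_or_lt_of_le hrq with rfl | hrq'
  · simp [psi_self]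
  have hr : 0 < r := lt_of_le_of_lt hp hpr'
  have hq0 : (0:ℝ) ≤ q := (hr.trans hrq').le
  -- F t = sqrt (psi r t) + sqrt (psi p r) - sqrt (psi p t), monotone on [r, q]
  have hcont : ∀ a : ℝ, Continuous (fun t => Real.sqrt (psi a t)) := by
    intro a
    have he : psi a = fun t => psi t a := funext (psi_symm a)
    exact Real.continuous_sqrt.comp (by rw [he]; exact continuous_psi_left a)
  have hFmono : MonotoneOn
      (fun t => Real.sqrt (psi r t) + Real.sqrt (psi p r) - Real.sqrt (psi p t)) (Icc r q) := by
    apply monotoneOn_of_deriv_nonneg (convex_Icc r q)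
    · exact (((hcont r).add continuous_const).sub (hcont p)).continuousOn
    all_goals {
      intro t ht
      rw [interior_Icc] at ht
      have htr : r < t := ht.1
      have htp : p < t := lt_trans hpr' htr
      have ht0 : 0 < t := lt_of_le_of_lt hp htp
      have hDr : 0 < psi r t := psi_pos hr.le ht0.le (ne_of_lt htr)
      have hDp : 0 < psi p t := psi_pos hp ht0.le (ne_of_lt htp)
      have hder : ∀ a : ℝ, 0 ≤ a → a < t → 0 < psi a t → HasDerivAt
          (fun t => Real.sqrt (psi a t))
          (1 / (2 * Real.sqrt (psi a t)) * (log (2*t) - log (t+a))) t := by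
        intro a ha hat hD
        have hfun : (fun t => psi a t) = fun t => psi t a := by funext u; exact psi_symm a u
        have hinner : HasDerivAt (fun t => psi a t) (log (2*t) - log (t+a)) t := by
          rw [hfun]; exact hasDerivAt_psi ha ht0
        have hDne : psi a t ≠ 0 := ne_of_gt hD
        exact (Real.hasDerivAt_sqrt hDne).comp t hinner
      have hF : HasDerivAt
          (fun t => Real.sqrt (psi r t) + Real.sqrt (psi p r) - Real.sqrt (psi p t))
          (1 / (2 * Real.sqrt (psi r t)) * (log (2*t) - log (t+r)) -
           1 / (2 * Real.sqrt (psi p t)) * (log (2*t) - log (t+p))) t :=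
        ((hder r hr.le htr hDr).add_const _).sub (hder p hp htp hDp)
      first
      | exact hF.differentiableAt.differentiableWithinAt
      | { rw [hF.deriv]
          have hGm := G_mono ht0 (show p ∈ Ico 0 t from ⟨hp, htp⟩)
            (show r ∈ Ico 0 t from ⟨hr.le, htr⟩) hpr'.le
          simp only at hGm
          have e1 : ∀ a : ℝ, t + a = a + t := fun a => by ring
          rw [e1 r, e1 p]
          have hsr : 0 < Real.sqrt (psi r t) := Real.sqrt_pos.2 hDr
          have hsp : 0 < Real.sqrt (psi p t) := Real.sqrt_pos.2 hDp
          rw [div_le_div_iff₀ hsp hsr] at hGm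
          rw [sub_nonneg]
          rw [div_mul_eq_mul_div, div_mul_eq_mul_div, one_mul, one_mul,
            div_le_div_iff₀ (by positivity) (by positivity)]
          nlinarith [hGm, hsr.le, hsp.le] }
    }
  have h0 := hFmono (left_mem_Icc.2 hrq) (right_mem_Icc.2 hrq) hrq
  simp only [psi_self, Real.sqrt_zero, add_zero, zero_add, sub_self] at h0
  -- h0 : 0 + sqrt(psi p r) - sqrt (psi p r) ≤ sqrt (psi r q) + sqrt (psi p r) - sqrt (psi p q)
  have : Real.sqrt (psi p r) - Real.sqrt (psi p r) ≤
      Real.sqrt (psi r q) + Real.sqrt (psi p r) - Real.sqrt (psi p q) := by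
    simpa using h0
  linarith

lemma psi_sqrt_triangle_aux {p q r : ℝ} (hp : 0 ≤ p) (hq : 0 ≤ q) (hr : 0 ≤ r)
    (hpq : p ≤ q) :
    Real.sqrt (psi p q) ≤ Real.sqrt (psi p r) + Real.sqrt (psi r q) := by
  rcases le_total r p with h1 | h1
  · have := psi_antitoneOn hq (show r ∈ Set.Icc 0 q from ⟨hr, h1.trans hpq⟩)
      (show p ∈ Set.Icc 0 q from ⟨hp, hpq⟩) h1
    have h2 : Real.sqrt (psi p q) ≤ Real.sqrt (psi r q) := Real.sqrt_le_sqrt this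
    have := Real.sqrt_nonneg (psi p r)
    linarith
  · rcases le_total r q with h2 | h2
    · exact psi_sqrt_triangle_mid hp h1 h2
    · have hmono := psi_monotoneOn hp (show q ∈ Set.Ici p from hpq)
        (show r ∈ Set.Ici p from hpq.trans h2) h2
      simp only [] at hmono
      have h3 : Real.sqrt (psi q p) ≤ Real.sqrt (psi r p) := Real.sqrt_le_sqrt hmono
      rw [psi_symm q p, psi_symm r p] at h3
      have := Real.sqrt_nonneg (psi r q)
      linarith

theorem psi_sqrt_triangle {p q r : ℝ} (hp : 0 ≤ p) (hq : 0 ≤ q) (hr : 0 ≤ r) :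
    Real.sqrt (psi p q) ≤ Real.sqrt (psi p r) + Real.sqrt (psi r q) := by
  rcases le_total p q with hpq | hpq
  · exact psi_sqrt_triangle_aux hp hq hr hpq
  · have := psi_sqrt_triangle_aux hq hp hr hpq
    rw [psi_symm q p, psi_symm q r, psi_symm r p] at this
    linarith

-- === from a6.lean ===
lemma kk_zero_left {m : ℝ} : kk 0 m = m := by simp [kk]

lemma kk_add_le {p1 m1 p2 m2 : ℝ} (hp1 : 0 ≤ p1) (hp2 : 0 ≤ p2)
    (hm1 : 0 ≤ m1) (hm2 : 0 ≤ m2) (h1 : p1 ≤ 2*m1) (h2 : p2 ≤ 2*m2) :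
    kk (p1+p2) (m1+m2) ≤ kk p1 m1 + kk p2 m2 := by
  rcases eq_or_lt_of_le hm1 with hm1' | hm1'
  · have hp1' : p1 = 0 := le_antisymm (by linarith) hp1
    simp [← hm1', hp1', kk_zero, kk_zero_left]
  rcases eq_or_lt_of_le hm2 with hm2' | hm2'
  · have hp2' : p2 = 0 := le_antisymm (by linarith) hp2
    simp [← hm2', hp2', kk_zero, kk_zero_left]
  set P := p1 + p2 with hP
  set M := m1 + m2 with hM
  have hM0 : 0 < M := by rw [hM]; linarith
  have key : ∀ p m : ℝ, 0 ≤ p → 0 < m → p ≤ P →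
      p * (log P - log M) + m - m * (P/M) ≤ kk p m := by
    intro p m hp hm hpP
    rcases eq_or_lt_of_le hp with hp' | hp'
    · rw [← hp']
      have : 0 ≤ m * (P/M) := by
        apply mul_nonneg hm.le
        apply div_nonneg _ hM0.le
        rw [hP]; linarith
      simp [kk]; nlinarith
    · have hP0 : 0 < P := lt_of_lt_of_le hp' hpP
      set y := m * (P/M) with hy
      have hy0 : 0 < y := by rw [hy]; positivity
      have hkk := kk_nonneg hp'.le hy0
      have hlogy : log y = log m + log P - log M := by
        rw [hy, Real.log_mul (ne_of_gt hm) (by positivity),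
          Real.log_div (ne_of_gt hP0) (ne_of_gt hM0)]
        ring
      unfold kk at hkk ⊢
      rw [hlogy] at hkk
      nlinarith [hkk]
  have k1 := key p1 m1 hp1 hm1' (by rw [hP]; linarith)
  have k2 := key p2 m2 hp2 hm2' (by rw [hP]; linarith)
  have hsum : (p1 * (log P - log M) + m1 - m1 * (P/M))
      + (p2 * (log P - log M) + m2 - m2 * (P/M)) = kk P M := by
    unfold kk
    have : m1 * (P/M) + m2 * (P/M) = P := by
      rw [← add_mul, ← hM]; field_simp
    nlinarith [this]
  linarith

lemma kk_sum_le {ι : Type*} (p m : ι → ℝ) (hp : ∀ i, 0 ≤ p i) (hm : ∀ i, 0 ≤ m i)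
    (hpm : ∀ i, p i ≤ 2 * m i) (F : Finset ι) :
    kk (∑ i ∈ F, p i) (∑ i ∈ F, m i) ≤ ∑ i ∈ F, kk (p i) (m i) := by
  classical
  induction F using Finset.cons_induction with
  | empty => simp [kk_zero]
  | cons a F ha ih =>
    rw [Finset.sum_cons, Finset.sum_cons, Finset.sum_cons]
    calc kk (p a + ∑ i ∈ F, p i) (m a + ∑ i ∈ F, m i)
        ≤ kk (p a) (m a) + kk (∑ i ∈ F, p i) (∑ i ∈ F, m i) := by
          apply kk_add_le (hp a) (Finset.sum_nonneg fun i _ => hp i) (hm a)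
            (Finset.sum_nonneg fun i _ => hm i) (hpm a)
          rw [Finset.mul_sum]
          exact Finset.sum_le_sum fun i _ => hpm i
      _ ≤ kk (p a) (m a) + ∑ i ∈ F, kk (p i) (m i) := by linarith [ih]

lemma kk_le_psi_half {p m : ℝ} (hp : 0 ≤ p) (hm : 0 ≤ m) (hpm : p ≤ 2*m) :
    kk p m ≤ p + m := by
  rcases eq_or_lt_of_le hp with hp' | hp'
  · rw [← hp', kk_zero_left]; linarith
  · have hm0 : 0 < m := by linarith
    have : log p - log m = log (p/m) := (Real.log_div (ne_of_gt hp') (ne_of_gt hm0)).symm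
    have hle : log (p/m) ≤ log 2 := by
      apply Real.log_le_log (by positivity)
      rw [div_le_iff₀ hm0]; linarith
    have hl2 : log 2 ≤ 1 := by
      have := Real.log_le_sub_one_of_pos (show (0:ℝ) < 2 by norm_num)
      linarith
    unfold kk
    nlinarith [hp'.le, this, hle, hl2]

lemma kk_continuousAt {x y : ℝ} (hy : y ≠ 0) :
    ContinuousAt (fun z : ℝ × ℝ => kk z.1 z.2) (x, y) := by
  unfold kk
  have h1 : ContinuousAt (fun z : ℝ × ℝ => z.1 * log z.1) (x, y) :=
    (Real.continuous_mul_log.comp continuous_fst).continuousAt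
  have h2 : ContinuousAt (fun z : ℝ × ℝ => z.1 * log z.2) (x, y) := by
    apply ContinuousAt.mul continuous_fst.continuousAt
    exact ContinuousAt.comp (x := ((x, y) : ℝ × ℝ))
      (g := log) (f := fun z : ℝ × ℝ => z.2)
      (Real.continuousAt_log hy) continuous_snd.continuousAt
  exact ((h1.sub h2).add continuous_snd.continuousAt).sub continuous_fst.continuousAt

set_option maxHeartbeats 1000000 in
lemma kk_tsum_le {ι : Type*} [Countable ι] (p m : ι → ℝ) (hp : ∀ i, 0 ≤ p i)
    (hm : ∀ i, 0 ≤ m i) (hpm : ∀ i, p i ≤ 2 * m i)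
    (hsp : Summable p) (hsm : Summable m) :
    kk (∑' i, p i) (∑' i, m i) ≤ ∑' i, kk (p i) (m i) := by
  have hkknn : ∀ i, 0 ≤ kk (p i) (m i) := by
    intro i
    rcases eq_or_lt_of_le (hm i) with h | h
    · have : p i = 0 := le_antisymm (by linarith [hpm i, h]) (hp i)
      rw [this, kk_zero_left, ← h]
    · exact kk_nonneg (hp i) h
  have hskk : Summable (fun i => kk (p i) (m i)) :=
    Summable.of_nonneg_of_le hkknn (fun i => kk_le_psi_half (hp i) (hm i) (hpm i))
      (hsp.add hsm)
  rcases eq_or_lt_of_le (tsum_nonneg hm : 0 ≤ ∑' i, m i) with hM | hM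
  · have hmz : ∀ i, m i = 0 := fun i =>
      le_antisymm (by rw [hM]; exact Summable.le_tsum hsm i (fun j _ => hm j)) (hm i)
    have hpz : ∀ i, p i = 0 := fun i =>
      le_antisymm (by have := hpm i; rw [hmz i] at this; linarith) (hp i)
    have h1 : ∑' i, p i = 0 := by simp [hpz]
    have h2 : ∑' i, m i = 0 := by simp [hmz]
    rw [h1, h2, kk_zero]
    exact tsum_nonneg hkknn
  · have hprod : Filter.Tendsto
        (fun F : Finset ι => ((∑ i ∈ F, p i, ∑ i ∈ F, m i) : ℝ × ℝ))
        Filter.atTop (nhds (∑' i, p i, ∑' i, m i)) :=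
      Filter.Tendsto.prodMk_nhds hsp.hasSum hsm.hasSum
    have htend : Filter.Tendsto
        (fun F : Finset ι => kk (∑ i ∈ F, p i) (∑ i ∈ F, m i))
        Filter.atTop (nhds (kk (∑' i, p i) (∑' i, m i))) :=
      ((kk_continuousAt (ne_of_gt hM)).tendsto).comp hprod
    apply le_of_tendsto htend
    filter_upwards with F
    calc kk (∑ i ∈ F, p i) (∑ i ∈ F, m i) ≤ ∑ i ∈ F, kk (p i) (m i) :=
          kk_sum_le p m hp hm hpm F
      _ ≤ ∑' i, kk (p i) (m i) := Summable.sum_le_tsum F (fun i _ => hkknn i) hskk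

-- === from a7.lean ===
lemma psi_le_abs {p q : ℝ} (hp : 0 ≤ p) (hq : 0 ≤ q) : psi p q ≤ |p - q| * log 2 := by
  rcases le_total q p with h | h
  · rw [abs_of_nonneg (by linarith)]; exact psi_le_tv hq h
  · rw [abs_of_nonpos (by linarith), psi_symm]
    have := psi_le_tv hp h
    convert this using 2
    ring

lemma psi_le_lin {p q : ℝ} (hp : 0 ≤ p) (hq : 0 ≤ q) : psi p q ≤ 2*(p+q) := by
  rw [psi_eq_kk hp hq]
  have h1 := kk_le_psi_half hp (by positivity : (0:ℝ) ≤ (p+q)/2) (by linarith)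
  have h2 := kk_le_psi_half hq (by positivity : (0:ℝ) ≤ (p+q)/2) (by linarith)
  linarith

-- 2D Minkowski for sqrt
lemma sqrt_two_add_le {x1 x2 y1 y2 : ℝ} (hx1 : 0 ≤ x1) (hx2 : 0 ≤ x2)
    (hy1 : 0 ≤ y1) (hy2 : 0 ≤ y2) :
    Real.sqrt ((x1+y1)^2 + (x2+y2)^2) ≤ Real.sqrt (x1^2+x2^2) + Real.sqrt (y1^2+y2^2) := by
  have hA : (0:ℝ) ≤ x1^2 + x2^2 := by positivity
  have hB : (0:ℝ) ≤ y1^2 + y2^2 := by positivity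
  have hcs : x1*y1 + x2*y2 ≤ Real.sqrt (x1^2+x2^2) * Real.sqrt (y1^2+y2^2) := by
    rw [← Real.sqrt_mul hA]
    have h1 : (x1*y1 + x2*y2)^2 ≤ (x1^2+x2^2) * (y1^2+y2^2) := by nlinarith [sq_nonneg (x1*y2 - x2*y1)]
    have h2 : x1*y1 + x2*y2 = Real.sqrt ((x1*y1+x2*y2)^2) := by
      rw [Real.sqrt_sq (by positivity)]
    rw [h2]
    exact Real.sqrt_le_sqrt h1
  rw [Real.sqrt_le_left (by positivity)]
  have hs1 := Real.sq_sqrt hA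
  have hs2 := Real.sq_sqrt hB
  nlinarith [hcs]

-- triangle for two-coordinate JS
lemma psi2_sqrt_triangle {a1 a2 b1 b2 c1 c2 : ℝ} (ha1 : 0 ≤ a1) (ha2 : 0 ≤ a2)
    (hb1 : 0 ≤ b1) (hb2 : 0 ≤ b2) (hc1 : 0 ≤ c1) (hc2 : 0 ≤ c2) :
    Real.sqrt (psi a1 b1 + psi a2 b2) ≤
      Real.sqrt (psi a1 c1 + psi a2 c2) + Real.sqrt (psi c1 b1 + psi c2 b2) := by
  have t1 := psi_sqrt_triangle ha1 hb1 hc1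
  have t2 := psi_sqrt_triangle ha2 hb2 hc2
  set u1 := Real.sqrt (psi a1 c1); set v1 := Real.sqrt (psi c1 b1)
  set u2 := Real.sqrt (psi a2 c2); set v2 := Real.sqrt (psi c2 b2)
  have hu1 : (0:ℝ) ≤ u1 := Real.sqrt_nonneg _
  have hu2 : (0:ℝ) ≤ u2 := Real.sqrt_nonneg _
  have hv1 : (0:ℝ) ≤ v1 := Real.sqrt_nonneg _
  have hv2 : (0:ℝ) ≤ v2 := Real.sqrt_nonneg _
  have hb1' : psi a1 b1 ≤ (u1+v1)^2 := by
    have := Real.sqrt_le_left (x := psi a1 b1) (by positivity) |>.1 t1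
    exact this
  have hb2' : psi a2 b2 ≤ (u2+v2)^2 := by
    exact Real.sqrt_le_left (by positivity) |>.1 t2
  calc Real.sqrt (psi a1 b1 + psi a2 b2) ≤ Real.sqrt ((u1+v1)^2 + (u2+v2)^2) :=
        Real.sqrt_le_sqrt (by linarith)
    _ ≤ Real.sqrt (u1^2+u2^2) + Real.sqrt (v1^2+v2^2) := sqrt_two_add_le hu1 hu2 hv1 hv2
    _ = Real.sqrt (psi a1 c1 + psi a2 c2) + Real.sqrt (psi c1 b1 + psi c2 b2) := by
        rw [Real.sq_sqrt (psi_nonneg ha1 hc1), Real.sq_sqrt (psi_nonneg ha2 hc2),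
          Real.sq_sqrt (psi_nonneg hc1 hb1), Real.sq_sqrt (psi_nonneg hc2 hb2)]

lemma kl_term_eq {p q : ℝ} (hp : 0 ≤ p) (hq : 0 ≤ q) :
    p * Real.logb 2 (p / ((p+q)/2)) + q * Real.logb 2 (q / ((p+q)/2)) = psi p q / log 2 := by
  have key : ∀ x y : ℝ, 0 ≤ x → 0 < x + y → x * Real.logb 2 (x / ((x+y)/2))
      = (x * log (2*x) - x * log (x+y)) / log 2 := by
    intro x y hx hxy
    rcases eq_or_lt_of_le hx with h | h
    · simp [← h]
    · rw [Real.logb, Real.log_div (ne_of_gt h) (by positivity)]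
      rw [Real.log_div (by positivity) (by norm_num) ]
      rw [Real.log_mul (by norm_num) (ne_of_gt h)]
      ring
  rcases eq_or_lt_of_le (add_nonneg hp hq) with h | h
  · have hp0 : p = 0 := by linarith
    have hq0 : q = 0 := by linarith
    simp [psi, hp0, hq0]
  · have e1 := key p q hp (by linarith)
    have e2 := key q p hq (by linarith)
    rw [show (q+p) = (p+q) by ring] at e2
    rw [e1, e2]
    unfold psi
    ring

lemma log_two_ge_half : (1:ℝ)/2 ≤ log 2 := by
  have := Real.log_two_gt_d9
  linarith

lemma kl_term_abs_le {p q : ℝ} (hp : 0 ≤ p) (hq : 0 ≤ q) :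
    |p * Real.logb 2 (p / ((p+q)/2))| ≤ 2*(p+q) := by
  rcases eq_or_lt_of_le hp with h | h
  · simp [← h]; positivity
  · have hm : 0 < (p+q)/2 := by linarith
    set m := (p+q)/2 with hmdef
    have hub : p * log (p/m) ≤ p * log 2 := by
      apply mul_le_mul_of_nonneg_left _ hp
      apply Real.log_le_log (by positivity)
      rw [div_le_iff₀ hm]; rw [hmdef]; linarith
    have hlb : p - m ≤ p * log (p/m) := by
      have hlog : log (m/p) ≤ m/p - 1 := Real.log_le_sub_one_of_pos (by positivity)
      have h2 : p * log (m/p) ≤ m - p := by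
        have := mul_le_mul_of_nonneg_left hlog hp
        have hex : p * (m/p - 1) = m - p := by field_simp
        linarith [hex ▸ this]
      have h3 : log (p/m) = - log (m/p) := by
        rw [← Real.log_inv]
        congr 1
        field_simp
      rw [h3]; nlinarith
    have habs : |p * log (p/m)| ≤ p * log 2 + m := by
      rw [abs_le]
      constructor
      · nlinarith [hm.le, mul_nonneg hp (Real.log_nonneg (show (1:ℝ) ≤ 2 by norm_num))]
      · nlinarith [hm.le, mul_nonneg hp (Real.log_nonneg (show (1:ℝ) ≤ 2 by norm_num))]
    have hlogb : p * Real.logb 2 (p/m) = (p * log (p/m)) / log 2 := by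
      rw [Real.logb]; ring
    rw [hlogb, abs_div, abs_of_nonneg (Real.log_nonneg (by norm_num : (1:ℝ) ≤ 2))]
    rw [div_le_iff₀ (by linarith [log_two_ge_half])]
    have hl2 := log_two_ge_half
    have hl2' : log 2 ≤ 1 := by
      have := Real.log_le_sub_one_of_pos (show (0:ℝ) < 2 by norm_num); linarith
    rw [hmdef] at habs ⊢
    nlinarith [habs, hp, hq]

lemma summable_psi {α : Type*} {p q : α → ℝ} (hp : ∀ a, 0 ≤ p a) (hq : ∀ a, 0 ≤ q a)
    (hsp : Summable p) (hsq : Summable q) : Summable (fun a => psi (p a) (q a)) := by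
  apply Summable.of_nonneg_of_le (fun a => psi_nonneg (hp a) (hq a))
    (fun a => psi_le_lin (hp a) (hq a))
  exact (hsp.add hsq).mul_left 2

lemma jsFun_eq {α : Type*} (P Q : α → ℝ≥0∞) (hP : ∀ a, P a ≠ ∞) (hQ : ∀ a, Q a ≠ ∞)
    (hsP : Summable (fun a => (P a).toReal)) (hsQ : Summable (fun a => (Q a).toReal)) :
    jsFun P Q = (∑' a, psi (P a).toReal (Q a).toReal) / (2 * log 2) := by
  set p : α → ℝ := fun a => (P a).toReal with hpdef
  set q : α → ℝ := fun a => (Q a).toReal with hqdef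
  have hp : ∀ a, 0 ≤ p a := fun a => ENNReal.toReal_nonneg
  have hq : ∀ a, 0 ≤ q a := fun a => ENNReal.toReal_nonneg
  have hm : ∀ a, ((P a + Q a)/2).toReal = (p a + q a)/2 := by
    intro a
    rw [ENNReal.toReal_div, ENNReal.toReal_add (hP a) (hQ a)]
    norm_num
    rfl
  have h1 : klFun P (fun a => (P a + Q a)/2) = ∑' a, p a * Real.logb 2 (p a/((p a + q a)/2)) := by
    unfold klFun
    exact tsum_congr fun a => by rw [hm a]
  have h2 : klFun Q (fun a => (P a + Q a)/2) = ∑' a, q a * Real.logb 2 (q a/((p a + q a)/2)) := by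
    unfold klFun
    exact tsum_congr fun a => by rw [hm a]
  have hs1 : Summable (fun a => p a * Real.logb 2 (p a/((p a + q a)/2))) := by
    apply Summable.of_abs
    apply Summable.of_nonneg_of_le (fun a => abs_nonneg _)
      (fun a => kl_term_abs_le (hp a) (hq a))
    exact (hsP.add hsQ).mul_left 2
  have hs2 : Summable (fun a => q a * Real.logb 2 (q a/((p a + q a)/2))) := by
    apply Summable.of_abs
    apply Summable.of_nonneg_of_le (fun a => abs_nonneg _)
      (fun a => ?_) ((hsQ.add hsP).mul_left 2)
    have := kl_term_abs_le (hq a) (hp a)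
    rw [show q a + p a = p a + q a from add_comm _ _] at this
    linarith [this]
  unfold jsFun
  rw [h1, h2, ← Summable.tsum_add hs1 hs2]
  have heach : ∀ a, p a * Real.logb 2 (p a/((p a + q a)/2))
      + q a * Real.logb 2 (q a/((p a + q a)/2)) = psi (p a) (q a) / log 2 :=
    fun a => kl_term_eq (hp a) (hq a)
  rw [tsum_congr heach, tsum_div_const, div_div, mul_comm]

lemma psi_tsum_le {ι : Type*} [Countable ι] (p q : ι → ℝ) (hp : ∀ i, 0 ≤ p i)
    (hq : ∀ i, 0 ≤ q i) (hsp : Summable p) (hsq : Summable q) :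
    psi (∑' i, p i) (∑' i, q i) ≤ ∑' i, psi (p i) (q i) := by
  set m : ι → ℝ := fun i => (p i + q i)/2 with hmdef
  have hm : ∀ i, 0 ≤ m i := fun i => by
    have := hp i; have := hq i; rw [hmdef]; positivity
  have hsm : Summable m := by
    apply Summable.div_const
    exact hsp.add hsq
  have hmsum : ∑' i, m i = ((∑' i, p i) + ∑' i, q i)/2 := by
    rw [hmdef, tsum_div_const, Summable.tsum_add hsp hsq]
  have hk1 := kk_tsum_le p m hp hm (fun i => by rw [hmdef]; have := hq i; simp; linarith) hsp hsm
  have hk2 := kk_tsum_le q m hq hm (fun i => by rw [hmdef]; have := hp i; simp; linarith) hsq hsm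
  have hkknn : ∀ (x : ι → ℝ), (∀ i, 0 ≤ x i) → (∀ i, x i ≤ 2 * m i) → ∀ i, 0 ≤ kk (x i) (m i) := by
    intro x hx hxm i
    rcases eq_or_lt_of_le (hm i) with h | h
    · have : x i = 0 := le_antisymm (by linarith [hxm i, h]) (hx i)
      rw [this, kk_zero_left, ← h]
    · exact kk_nonneg (hx i) h
  have hple : ∀ i, p i ≤ 2 * m i := fun i => by rw [hmdef]; have := hq i; linarith
  have hqle : ∀ i, q i ≤ 2 * m i := fun i => by rw [hmdef]; have := hp i; linarith
  have hskk1 : Summable (fun i => kk (p i) (m i)) :=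
    Summable.of_nonneg_of_le (hkknn p hp hple) (fun i => kk_le_psi_half (hp i) (hm i) (hple i))
      (hsp.add hsm)
  have hskk2 : Summable (fun i => kk (q i) (m i)) :=
    Summable.of_nonneg_of_le (hkknn q hq hqle) (fun i => kk_le_psi_half (hq i) (hm i) (hqle i))
      (hsq.add hsm)
  rw [psi_eq_kk (tsum_nonneg hp) (tsum_nonneg hq)]
  have hrw : ((∑' i, p i) + ∑' i, q i)/2 = ∑' i, m i := hmsum.symm
  rw [hrw]
  calc kk (∑' i, p i) (∑' i, m i) + kk (∑' i, q i) (∑' i, m i)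
      ≤ (∑' i, kk (p i) (m i)) + (∑' i, kk (q i) (m i)) := by linarith
    _ = ∑' i, (kk (p i) (m i) + kk (q i) (m i)) := (Summable.tsum_add hskk1 hskk2).symm
    _ = ∑' i, psi (p i) (q i) := tsum_congr fun i => by
        rw [psi_eq_kk (hp i) (hq i), hmdef]

lemma js_data_proc {𝒵 : Type*} [Countable 𝒵] (p q : 𝒵 → ℝ) (h : 𝒵 → Bool)
    (hp : ∀ z, 0 ≤ p z) (hq : ∀ z, 0 ≤ q z) (hsp : Summable p) (hsq : Summable q) :
    psi (∑' z : {z | h z = false}, p z) (∑' z : {z | h z = false}, q z)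
      + psi (∑' z : {z | h z = true}, p z) (∑' z : {z | h z = true}, q z)
      ≤ ∑' z, psi (p z) (q z) := by
  have hcompl : ({z | h z = false}ᶜ : Set 𝒵) = {z | h z = true} := by
    ext z; simp
  have hpsisum : Summable (fun z => psi (p z) (q z)) := summable_psi hp hq hsp hsq
  have hsplit := Summable.tsum_add_tsum_compl (f := fun z => psi (p z) (q z))
    (s := {z | h z = false}) (hpsisum.subtype _) (hpsisum.subtype _)
  rw [hcompl] at hsplit
  have part : ∀ (s : Set 𝒵),
      psi (∑' z : s, p z) (∑' z : s, q z) ≤ ∑' z : s, psi (p z) (q z) :=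
    fun s => psi_tsum_le (fun z : s => p z) (fun z : s => q z)
      (fun z => hp z) (fun z => hq z) (hsp.subtype _) (hsq.subtype _)
  have h1 := part {z | h z = false}
  have h2 := part {z | h z = true}
  linarith [hsplit, h1, h2]

-- === from a8.lean ===
section Glue
variable {Ω : Type*} [MeasurableSpace Ω]

lemma bool_meas_ne {V W : Ω → Bool} (hV : Measurable V) (hW : Measurable W) :
    MeasurableSet {ω | V ω ≠ W ω} := by
  have : {ω | V ω ≠ W ω} = ((V ⁻¹' {true}) ∩ (W ⁻¹' {true})ᶜ)
      ∪ ((V ⁻¹' {true})ᶜ ∩ (W ⁻¹' {true})) := by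
    ext ω; cases hv : V ω <;> cases hw : W ω <;> simp [hv, hw]
  rw [this]
  exact ((hV (measurableSet_singleton true)).inter
      (hW (measurableSet_singleton true)).compl).union
    ((hV (measurableSet_singleton true)).compl.inter (hW (measurableSet_singleton true)))

lemma integral_abs_ind (ν : Measure Ω) (V W : Ω → Bool) (hV : Measurable V)
    (hW : Measurable W) :
    ∫ ω, |(if V ω then (1:ℝ) else 0) - (if W ω then (1:ℝ) else 0)| ∂ν
      = (ν {ω | V ω ≠ W ω}).toReal := by
  have hset := bool_meas_ne hV hW
  have hint : ∀ ω, |(if V ω then (1:ℝ) else 0) - (if W ω then (1:ℝ) else 0)|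
      = Set.indicator {ω | V ω ≠ W ω} (fun _ => (1:ℝ)) ω := by
    intro ω
    by_cases hv : V ω <;> by_cases hw : W ω <;>
      simp [Set.indicator, hv, hw, Set.mem_setOf_eq]
  simp_rw [hint]
  rw [MeasureTheory.integral_indicator_const (1:ℝ) hset]
  simp
  rfl

lemma tv_le_ne (ν : Measure Ω) [IsFiniteMeasure ν] {V W : Ω → Bool} (b : Bool) :
    |(ν {ω | V ω = b}).toReal - (ν {ω | W ω = b}).toReal|
      ≤ (ν {ω | V ω ≠ W ω}).toReal := by
  have hsub : ∀ (V W : Ω → Bool), {ω | V ω = b} ⊆ {ω | W ω = b} ∪ {ω | V ω ≠ W ω} := by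
    intro V W ω hω
    by_cases h : V ω = W ω
    · left; rw [Set.mem_setOf_eq, ← h]; exact hω
    · right; exact h
  have key : ∀ (V W : Ω → Bool), (ν {ω | V ω = b}).toReal
      ≤ (ν {ω | W ω = b}).toReal + (ν {ω | V ω ≠ W ω}).toReal := by
    intro V W
    have h1 : ν {ω | V ω = b} ≤ ν {ω | W ω = b} + ν {ω | V ω ≠ W ω} :=
      (measure_mono (hsub V W)).trans (measure_union_le _ _)
    have h2 := (ENNReal.toReal_le_toReal (a := ν {ω | V ω = b}) (measure_ne_top ν _)
      (by simp [ENNReal.add_ne_top, measure_ne_top] :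
        ν {ω | W ω = b} + ν {ω | V ω ≠ W ω} ≠ ⊤)).2 h1
    rw [ENNReal.toReal_add (measure_ne_top ν _) (measure_ne_top ν _)] at h2
    exact h2
  rw [abs_sub_le_iff]
  constructor
  · linarith [key V W]
  · have h2 := key W V
    have : {ω | W ω ≠ V ω} = {ω | V ω ≠ W ω} := by ext ω; simp [ne_comm]
    rw [this] at h2
    linarith
  
lemma bool_mass_compl (ν : Measure Ω) [IsProbabilityMeasure ν] {W : Ω → Bool}
    (hW : Measurable W) :
    (ν {ω | W ω = false}).toReal = 1 - (ν {ω | W ω = true}).toReal := by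
  have hc : {ω | W ω = false} = {ω | W ω = true}ᶜ := by
    ext ω; cases h : W ω <;> simp [h]
  rw [hc, MeasureTheory.prob_compl_eq_one_sub (s := {ω | W ω = true})
    (show MeasurableSet {ω | W ω = true} from hW (measurableSet_singleton true))]
  rw [ENNReal.toReal_sub_of_le prob_le_one ENNReal.one_ne_top]
  simp

end Glue

/-- key lemma: with the Markov chain `X → Z = f(X) → Ŷ = h(Z)`,
`d_JS(D₀^Y, D₁^Y) ≤ √(Err₀(h∘f)) + d_JS(D₀^f, D₁^f) + √(Err₁(h∘f))`, where
`D_a^Y` (resp. `D_a^f`) is the conditional distribution of `Y` (resp. `Z = f(X)`)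
given `A = a`, and `Err_a(h∘f) = E[|Y - h(f(X))| | A = a]`. -/
theorem js_key_lemma
    {Ω 𝒳 𝒵 : Type*} [MeasurableSpace Ω] [MeasurableSpace 𝒵]
    [MeasurableSingletonClass 𝒵] [Countable 𝒵]
    (μ : Measure Ω) [IsProbabilityMeasure μ]
    (X : Ω → 𝒳) (Y A : Ω → Bool) (f : 𝒳 → 𝒵) (h : 𝒵 → Bool)
    (hY : Measurable Y) (hA : Measurable A)
    (hfX : Measurable (fun ω => f (X ω)))
    (hA0 : μ {ω | A ω = false} ≠ 0) (hA1 : μ {ω | A ω = true} ≠ 0) :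
    Real.sqrt (jsFun
        (fun b => (ProbabilityTheory.cond μ {ω | A ω = false}) {ω | Y ω = b})
        (fun b => (ProbabilityTheory.cond μ {ω | A ω = true}) {ω | Y ω = b}))
      ≤ Real.sqrt (∫ ω, |(if Y ω then (1:ℝ) else 0) -
            (if h (f (X ω)) then (1:ℝ) else 0)| ∂(ProbabilityTheory.cond μ {ω' | A ω' = false}))
        + Real.sqrt (jsFun
            (fun z => (ProbabilityTheory.cond μ {ω | A ω = false}) {ω | f (X ω) = z})
            (fun z => (ProbabilityTheory.cond μ {ω | A ω = true}) {ω | f (X ω) = z}))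
        + Real.sqrt (∫ ω, |(if Y ω then (1:ℝ) else 0) -
            (if h (f (X ω)) then (1:ℝ) else 0)| ∂(ProbabilityTheory.cond μ {ω' | A ω' = true})) := by
  have hW : Measurable (fun ω => h (f (X ω))) := (measurable_of_countable h).comp hfX
  set ν₀ := ProbabilityTheory.cond μ {ω | A ω = false} with hν₀def
  set ν₁ := ProbabilityTheory.cond μ {ω | A ω = true} with hν₁def
  haveI hPM0 : IsProbabilityMeasure ν₀ := cond_isProbabilityMeasure hA0
  haveI hPM1 : IsProbabilityMeasure ν₁ := cond_isProbabilityMeasure hA1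
  -- real masses
  set y0f := (ν₀ {ω | Y ω = false}).toReal with hy0f
  set y0t := (ν₀ {ω | Y ω = true}).toReal with hy0t
  set y1f := (ν₁ {ω | Y ω = false}).toReal with hy1f
  set y1t := (ν₁ {ω | Y ω = true}).toReal with hy1t
  set w0f := (ν₀ {ω | h (f (X ω)) = false}).toReal with hw0f
  set w0t := (ν₀ {ω | h (f (X ω)) = true}).toReal with hw0t
  set w1f := (ν₁ {ω | h (f (X ω)) = false}).toReal with hw1f
  set w1t := (ν₁ {ω | h (f (X ω)) = true}).toReal with hw1t
  set pz0 : 𝒵 → ℝ := fun z => (ν₀ {ω | f (X ω) = z}).toReal with hpz0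
  set pz1 : 𝒵 → ℝ := fun z => (ν₁ {ω | f (X ω) = z}).toReal with hpz1
  have hmeasz : ∀ z : 𝒵, MeasurableSet {ω | f (X ω) = z} :=
    fun z => hfX (measurableSet_singleton z)
  -- LHS bridge
  have hLHS : jsFun (fun b => ν₀ {ω | Y ω = b}) (fun b => ν₁ {ω | Y ω = b})
      = (psi y0f y1f + psi y0t y1t) / (2*Real.log 2) := by
    rw [jsFun_eq _ _ (fun b => measure_ne_top _ _) (fun b => measure_ne_top _ _)
      Summable.of_finite Summable.of_finite, tsum_bool]
  -- Z-sums
  have hsum : ∀ (ν : Measure Ω) , ∑' z, ν {ω | f (X ω) = z} = ν Set.univ := by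
    intro ν
    have hUz : ⋃ z, {ω | f (X ω) = z} = Set.univ := by
      ext ω; simp
    rw [← hUz, MeasureTheory.measure_iUnion ?_ hmeasz]
    exact fun a b hab => Set.disjoint_left.mpr fun ω ha hb => hab (ha.symm.trans hb)
  have hsp0 : Summable pz0 := ENNReal.summable_toReal (by
    rw [hsum ν₀, measure_univ]; exact ENNReal.one_ne_top)
  have hsp1 : Summable pz1 := ENNReal.summable_toReal (by
    rw [hsum ν₁, measure_univ]; exact ENNReal.one_ne_top)
  have hpz0nn : ∀ z, 0 ≤ pz0 z := fun z => ENNReal.toReal_nonneg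
  have hpz1nn : ∀ z, 0 ≤ pz1 z := fun z => ENNReal.toReal_nonneg
  have hMid : jsFun (fun z => ν₀ {ω | f (X ω) = z}) (fun z => ν₁ {ω | f (X ω) = z})
      = (∑' z, psi (pz0 z) (pz1 z)) / (2*Real.log 2) :=
    jsFun_eq _ _ (fun z => measure_ne_top _ _) (fun z => measure_ne_top _ _) hsp0 hsp1
  -- decomposition of the classifier masses
  have hdecomp : ∀ (ν : Measure Ω), IsFiniteMeasure ν → ∀ (b : Bool),
      (ν {ω | h (f (X ω)) = b}).toReal
        = ∑' z : {z | h z = b}, (ν {ω | f (X ω) = (z : 𝒵)}).toReal := by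
    intro ν hfin b
    haveI := hfin
    have hU : {ω | h (f (X ω)) = b} = ⋃ z : {z | h z = b}, {ω | f (X ω) = (z : 𝒵)} := by
      ext ω
      simp only [Set.mem_iUnion, Set.mem_setOf_eq]
      constructor
      · intro hω; exact ⟨⟨f (X ω), hω⟩, rfl⟩
      · rintro ⟨⟨z, hz⟩, hω⟩
        rw [show f (X ω) = z from hω]; exact hz
    have hmu := MeasureTheory.measure_iUnion (μ := ν)
      (f := fun z : {z | h z = b} => {ω | f (X ω) = (z : 𝒵)})
      (fun a b hab => Set.disjoint_left.mpr fun ω ha hb =>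
        hab (Subtype.ext (ha.symm.trans hb)))
      (fun z => hmeasz (z : 𝒵))
    rw [hU, hmu, ENNReal.tsum_toReal_eq (fun z => measure_ne_top _ _)]
  have hw0f' : w0f = ∑' z : {z | h z = false}, pz0 z := hdecomp ν₀ inferInstance false
  have hw0t' : w0t = ∑' z : {z | h z = true}, pz0 z := hdecomp ν₀ inferInstance true
  have hw1f' : w1f = ∑' z : {z | h z = false}, pz1 z := hdecomp ν₁ inferInstance false
  have hw1t' : w1t = ∑' z : {z | h z = true}, pz1 z := hdecomp ν₁ inferInstance true
  -- data processing
  have hDP : psi w0f w1f + psi w0t w1t ≤ ∑' z, psi (pz0 z) (pz1 z) := by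
    rw [hw0f', hw0t', hw1f', hw1t']
    exact js_data_proc pz0 pz1 h hpz0nn hpz1nn hsp0 hsp1
  -- error terms
  have herr0 : ∫ ω, |(if Y ω then (1:ℝ) else 0) - (if h (f (X ω)) then (1:ℝ) else 0)| ∂ν₀
      = (ν₀ {ω | Y ω ≠ h (f (X ω))}).toReal :=
    integral_abs_ind ν₀ Y (fun ω => h (f (X ω))) hY hW
  have herr1 : ∫ ω, |(if Y ω then (1:ℝ) else 0) - (if h (f (X ω)) then (1:ℝ) else 0)| ∂ν₁
      = (ν₁ {ω | Y ω ≠ h (f (X ω))}).toReal :=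
    integral_abs_ind ν₁ Y (fun ω => h (f (X ω))) hY hW
  set e0 := (ν₀ {ω | Y ω ≠ h (f (X ω))}).toReal with he0
  set e1 := (ν₁ {ω | Y ω ≠ h (f (X ω))}).toReal with he1
  have he0nn : 0 ≤ e0 := ENNReal.toReal_nonneg
  have he1nn : 0 ≤ e1 := ENNReal.toReal_nonneg
  have htv0 : |y0t - w0t| ≤ e0 := tv_le_ne ν₀ (V := Y) (W := fun ω => h (f (X ω))) true
  have htv1 : |y1t - w1t| ≤ e1 := tv_le_ne ν₁ (V := Y) (W := fun ω => h (f (X ω))) true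
  have hl2 : 0 < Real.log 2 := Real.log_pos one_lt_two
  -- nonnegativity of masses
  have hnn : ∀ x : ℝ≥0∞, (0:ℝ) ≤ x.toReal := fun x => ENNReal.toReal_nonneg
  -- side estimates
  have hside : ∀ (yf yt wf wt e : ℝ), 0 ≤ yf → 0 ≤ yt → 0 ≤ wf → 0 ≤ wt →
      yf = 1 - yt → wf = 1 - wt → |yt - wt| ≤ e →
      psi yf wf + psi yt wt ≤ 2*Real.log 2 * e := by
    intro yf yt wf wt e hyf hyt hwf hwt hyc hwc htv
    have h1 := psi_le_abs hyf hwf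
    have h2 := psi_le_abs hyt hwt
    have habs : |yf - wf| = |yt - wt| := by
      rw [hyc, hwc, show (1:ℝ) - yt - (1 - wt) = -(yt - wt) by ring, abs_neg]
    rw [habs] at h1
    nlinarith [abs_nonneg (yt - wt), htv, hl2]
  have hcmp0 : ∀ (V : Ω → Bool), Measurable V →
      (ν₀ {ω | V ω = false}).toReal = 1 - (ν₀ {ω | V ω = true}).toReal :=
    fun V hV => bool_mass_compl ν₀ hV
  have hcmp1 : ∀ (V : Ω → Bool), Measurable V →
      (ν₁ {ω | V ω = false}).toReal = 1 - (ν₁ {ω | V ω = true}).toReal :=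
    fun V hV => bool_mass_compl ν₁ hV
  have hside0 : psi y0f w0f + psi y0t w0t ≤ 2*Real.log 2 * e0 :=
    hside y0f y0t w0f w0t e0 (hnn _) (hnn _) (hnn _) (hnn _)
      (hcmp0 Y hY) (hcmp0 _ hW) htv0
  have hside1 : psi y1f w1f + psi y1t w1t ≤ 2*Real.log 2 * e1 :=
    hside y1f y1t w1f w1t e1 (hnn _) (hnn _) (hnn _) (hnn _)
      (hcmp1 Y hY) (hcmp1 _ hW) htv1
  -- triangle
  have t1 : Real.sqrt (psi y0f y1f + psi y0t y1t) ≤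
      Real.sqrt (psi y0f w0f + psi y0t w0t) + Real.sqrt (psi w0f y1f + psi w0t y1t) :=
    psi2_sqrt_triangle (hnn _) (hnn _) (hnn _) (hnn _) (hnn _) (hnn _)
  have t2 : Real.sqrt (psi w0f y1f + psi w0t y1t) ≤
      Real.sqrt (psi w0f w1f + psi w0t w1t) + Real.sqrt (psi w1f y1f + psi w1t y1t) :=
    psi2_sqrt_triangle (hnn _) (hnn _) (hnn _) (hnn _) (hnn _) (hnn _)
  -- final assembly
  rw [hLHS, hMid, herr0, herr1]
  set c := 2*Real.log 2 with hc
  have hcpos : (0:ℝ) < c := by rw [hc]; linarith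
  have hTYnn : 0 ≤ psi y0f y1f + psi y0t y1t := by
    have := psi_nonneg (hnn (ν₀ {ω | Y ω = false})) (hnn (ν₁ {ω | Y ω = false}))
    have := psi_nonneg (hnn (ν₀ {ω | Y ω = true})) (hnn (ν₁ {ω | Y ω = true}))
    linarith
  have nnY : 0 ≤ psi y0f y1f + psi y0t y1t :=
    add_nonneg (psi_nonneg (hnn _) (hnn _)) (psi_nonneg (hnn _) (hnn _))
  have nnA : 0 ≤ psi y0f w0f + psi y0t w0t :=
    add_nonneg (psi_nonneg (hnn _) (hnn _)) (psi_nonneg (hnn _) (hnn _))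
  have nnM : 0 ≤ psi w0f w1f + psi w0t w1t :=
    add_nonneg (psi_nonneg (hnn _) (hnn _)) (psi_nonneg (hnn _) (hnn _))
  have nnB : 0 ≤ psi w1f y1f + psi w1t y1t :=
    add_nonneg (psi_nonneg (hnn _) (hnn _)) (psi_nonneg (hnn _) (hnn _))
  have hsqc : 0 < Real.sqrt c := Real.sqrt_pos.2 hcpos
  calc Real.sqrt ((psi y0f y1f + psi y0t y1t)/c)
      = Real.sqrt (psi y0f y1f + psi y0t y1t) / Real.sqrt c := Real.sqrt_div nnY c
    _ ≤ (Real.sqrt (psi y0f w0f + psi y0t w0t) + Real.sqrt (psi w0f w1f + psi w0t w1t)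
        + Real.sqrt (psi w1f y1f + psi w1t y1t)) / Real.sqrt c := by
        exact div_le_div_of_nonneg_right (by linarith [t1, t2]) hsqc.le
    _ = Real.sqrt ((psi y0f w0f + psi y0t w0t)/c) + Real.sqrt ((psi w0f w1f + psi w0t w1t)/c)
        + Real.sqrt ((psi w1f y1f + psi w1t y1t)/c) := by
        rw [Real.sqrt_div nnA c, Real.sqrt_div nnM c, Real.sqrt_div nnB c]
        ring
    _ ≤ Real.sqrt e0 + Real.sqrt ((∑' z, psi (pz0 z) (pz1 z))/c) + Real.sqrt e1 := by
        have b1 : (psi y0f w0f + psi y0t w0t)/c ≤ e0 := by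
          rw [div_le_iff₀ hcpos]
          calc psi y0f w0f + psi y0t w0t ≤ c * e0 := by rw [hc]; exact hside0
            _ = e0 * c := mul_comm _ _
        have b2 : (psi w0f w1f + psi w0t w1t)/c ≤ (∑' z, psi (pz0 z) (pz1 z))/c := by
          exact div_le_div_of_nonneg_right hDP hcpos.le
        have b3 : (psi w1f y1f + psi w1t y1t)/c ≤ e1 := by
          rw [div_le_iff₀ hcpos, psi_symm w1f y1f, psi_symm w1t y1t]
          calc psi y1f w1f + psi y1t w1t ≤ c * e1 := by rw [hc]; exact hside1
            _ = e1 * c := mul_comm _ _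
        exact add_le_add (add_le_add (Real.sqrt_le_sqrt b1) (Real.sqrt_le_sqrt b2))
          (Real.sqrt_le_sqrt b3)
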